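/- Let k ≥ 2 be an integer and let I ⊂ (0,∞) be an interval closed under multiplication with 1 ∈ I. For positive functions f, g : I → (0,∞), the identity g(x₁⋯x_k)/f(x₁⋯x_k) = (g(x₁)+⋯+g(x_k))/(f(x₁)+⋯+f(x_k)) holds for all x₁,…,x_k ∈ I if and only if there exists c > 0 such that g = c·f. -/
import Mathlib


open Set Finset

theorem stmt_0 (k : ℕ) (hk : 2 ≤ k) (I : Set ℝ) (hI : I ⊆ Set.Ioi 0)
    (hIint : I.OrdConnected) (hmul : ∀ x ∈ I, ∀ y ∈ I, x * y ∈ I) (h1 : (1:ℝ) ∈ I)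
    (f g : ℝ → ℝ) (hf : ∀ x ∈ I, 0 < f x) (hg : ∀ x ∈ I, 0 < g x) :
    (∀ x : Fin k → ℝ, (∀ i, x i ∈ I) →
        g (∏ i, x i) / f (∏ i, x i) = (∑ i, g (x i)) / (∑ i, f (x i))) ↔
      ∃ c > 0, ∀ x ∈ I, g x = c * f x := by
  have hk0 : 0 < k := by omega
  haveI : NeZero k := ⟨by omega⟩
  constructor
  · intro h
    refine ⟨g 1 / f 1, div_pos (hg 1 h1) (hf 1 h1), ?_⟩
    intro x hx
    set v : Fin k → ℝ := fun i => if i = 0 then x else 1 with hv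
    have hvI : ∀ i, v i ∈ I := by
      intro i; simp only [hv]; split <;> [exact hx; exact h1]
    have hprod : (∏ i, v i) = x := by
      simp [hv]
    have hsg : (∑ i, g (v i)) = g x + (k - 1 : ℕ) * g 1 := by
      have : ∀ i, g (v i) = if i = 0 then g x else g 1 := by
        intro i; simp only [hv]; split <;> rfl
      simp only [this, Finset.sum_ite, Finset.filter_eq', Finset.mem_univ, if_true,
        Finset.sum_const, Finset.sum_singleton, nsmul_eq_mul,
        show (fun x : Fin k => ¬x = 0) = (· ≠ 0) from rfl, Finset.filter_ne',
        Finset.card_erase_of_mem, Finset.card_univ, Fintype.card_fin]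
      simp
    have hsf : (∑ i, f (v i)) = f x + (k - 1 : ℕ) * f 1 := by
      have : ∀ i, f (v i) = if i = 0 then f x else f 1 := by
        intro i; simp only [hv]; split <;> rfl
      simp only [this, Finset.sum_ite, Finset.filter_eq', Finset.mem_univ, if_true,
        Finset.sum_const, Finset.sum_singleton, nsmul_eq_mul,
        show (fun x : Fin k => ¬x = 0) = (· ≠ 0) from rfl, Finset.filter_ne',
        Finset.card_erase_of_mem, Finset.card_univ, Fintype.card_fin]
      simp
    have heq := h v hvI
    rw [hprod, hsg, hsf] at heq
    have hm : (0:ℝ) < (k - 1 : ℕ) := by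
      have : 1 ≤ k - 1 := by omega
      exact_mod_cast Nat.lt_of_lt_of_le Nat.zero_lt_one this
    have hfx := hf x hx; have hgx := hg x hx
    have hf1 := hf 1 h1; have hg1 := hg 1 h1
    rw [div_eq_div_iff (ne_of_gt hfx) (by positivity)] at heq
    have key : g x * f 1 = f x * g 1 := by
      have h2 : ((k - 1 : ℕ) : ℝ) * (g x * f 1) = ((k - 1 : ℕ) : ℝ) * (f x * g 1) := by
        nlinarith [heq]
      exact mul_left_cancel₀ (ne_of_gt hm) h2
    field_simp
    linarith [key]
  · rintro ⟨c, hc, hcf⟩ x hx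
    have hxI : ∀ i, x i ∈ I := hx
    have hpI : (∏ i, x i) ∈ I :=
      Finset.prod_induction x (· ∈ I) (fun a b ha hb => hmul a ha b hb) h1
        (fun i _ => hxI i)
    have hsum : (∑ i, g (x i)) = c * ∑ i, f (x i) := by
      rw [Finset.mul_sum]
      exact Finset.sum_congr rfl fun i _ => hcf (x i) (hxI i)
    have hsf : (0:ℝ) < ∑ i, f (x i) :=
      Finset.sum_pos (fun i _ => hf (x i) (hxI i)) Finset.univ_nonempty
    rw [hcf _ hpI, hsum, mul_div_assoc, mul_div_assoc,
      div_self (ne_of_gt (hf _ hpI)), div_self (ne_of_gt hsf)]
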